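/- Let K ⊂ ℂ be a compact convex set of diameter 2 containing -1 and 1, with width w, and let λ be the planar Lebesgue measure restricted to K. Then for every δ ∈ (0,1), λ(K_δ) ≥ w·δ, where K_δ = {x+iy ∈ K : |x| ≤ δ}; consequently λ(K_δ)/λ(K) ≥ δ/4. -/

import Mathlib

open Complex MeasureTheory
open scoped ENNReal

set_option maxHeartbeats 1600000 in
/-- Key projection inequality for the triangle (-1,0),(1,0),(m,h). -/
lemma keyproj (C S m h Sup Inf : ℝ) (hCS : C^2 + S^2 = 1) (hh : 0 ≤ h)
    (hd : (1+|m|)^2 + h^2 ≤ 4)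
    (h1 : -C ≤ Sup) (h2 : C ≤ Sup) (h3 : m*C + h*S ≤ Sup)
    (h4 : Inf ≤ -C) (h5 : Inf ≤ C) (h6 : Inf ≤ m*C + h*S) : h ≤ Sup - Inf := by
  set c := |C| with hc
  set s := |S| with hs
  clear_value c s
  have hc0 : 0 ≤ c := hc ▸ abs_nonneg _
  have hs0 : 0 ≤ s := hs ▸ abs_nonneg _
  have hcs : c^2 + s^2 = 1 := by rw [hc, hs, _root_.sq_abs, _root_.sq_abs]; exact hCS
  have hm0 : 0 ≤ |m| := abs_nonneg _
  have e1 : 2*c ≤ Sup - Inf := by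
    rcases abs_cases C with ⟨hC, _⟩ | ⟨hC, _⟩
    · rw [hc, hC]; linarith
    · rw [hc, hC]; linarith
  have hmC : -(|m| * c) ≤ m*C ∧ m*C ≤ |m| * c := by
    constructor
    · nlinarith [neg_abs_le (m*C), abs_mul m C]
    · nlinarith [le_abs_self (m*C), abs_mul m C]
  have e2 : h*s + (1-|m|)*c ≤ Sup - Inf := by
    rcases abs_cases S with ⟨hS, _⟩ | ⟨hS, _⟩
    · have : Inf ≤ -c := by
        rcases abs_cases C with ⟨hC, _⟩ | ⟨hC, _⟩
        · rw [hc, hC]; linarith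
        · rw [hc, hC]; linarith
      nlinarith [hmC.1]
    · have : c ≤ Sup := by
        rcases abs_cases C with ⟨hC, _⟩ | ⟨hC, _⟩
        · rw [hc, hC]; linarith
        · rw [hc, hC]; linarith
      nlinarith [hmC.2]
  rcases le_or_gt h (2*c) with hcase | hcase
  · linarith
  · have hs2 : (1+|m|) ≤ 2*s := by
      nlinarith [sq_nonneg (1 + |m| - 2*s)]
    have hm1 : |m| ≤ 1 := by nlinarith
    have k1 : h^2 ≤ (1-|m|)*(3+|m|) := by nlinarith
    have k2 : (1-|m|)*(3+|m|) ≤ (1-|m|)*(2*(1+s)) :=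
      mul_le_mul_of_nonneg_left (by linarith) (by linarith)
    have k3 : 2*(h*c) ≤ h^2 := by nlinarith
    have key : h*c ≤ (1-|m|)*(1+s) := by nlinarith
    have : h ≤ h*s + (1-|m|)*c := by
      nlinarith [mul_nonneg (sub_nonneg.2 key) hc0]
    linarith

/-- The normalized height profile of the triangle with vertices -1, 1 and an apex above `c`. -/
noncomputable def sfun (c x : ℝ) : ℝ := min ((x+1)/(c+1)) ((1-x)/(1-c))

lemma sfun_cont (c : ℝ) : Continuous (sfun c) :=
  ((continuous_id.add continuous_const).div_const _).min
    ((continuous_const.sub continuous_id).div_const _)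

lemma sfun_nonneg {c x : ℝ} (hc1 : -1 ≤ c) (hc2 : c ≤ 1) (hx1 : -1 ≤ x) (hx2 : x ≤ 1) :
    0 ≤ sfun c x :=
  le_min (div_nonneg (by linarith) (by linarith)) (div_nonneg (by linarith) (by linarith))

lemma sfun_mul_le₁ {c x : ℝ} (hc1 : -1 ≤ c) (hx1 : -1 ≤ x) (hx2 : x ≤ 1) :
    sfun c x * (1+c) ≤ 1+x := by
  rcases eq_or_lt_of_le (by linarith : (0:ℝ) ≤ 1+c) with h | h
  · rw [← h, mul_zero]; linarith
  · calc sfun c x * (1+c) ≤ (x+1)/(c+1) * (1+c) :=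
        mul_le_mul_of_nonneg_right (min_le_left _ _) (by linarith)
      _ = x + 1 := by rw [show (1+c) = (c+1) by ring, div_mul_cancel₀ _ (by linarith : c+1 ≠ 0)]
      _ ≤ 1 + x := by linarith

lemma sfun_mul_le₂ {c x : ℝ} (hc2 : c ≤ 1) (hx1 : -1 ≤ x) (hx2 : x ≤ 1) :
    sfun c x * (1-c) ≤ 1-x := by
  rcases eq_or_lt_of_le (by linarith : (0:ℝ) ≤ 1-c) with h | h
  · rw [← h, mul_zero]; linarith
  · calc sfun c x * (1-c) ≤ (1-x)/(1-c) * (1-c) :=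
        mul_le_mul_of_nonneg_right (min_le_right _ _) (by linarith)
      _ = 1 - x := by rw [div_mul_cancel₀ _ (by linarith : 1-c ≠ 0)]

lemma integ1 (c u v : ℝ) : ∫ x in u..v, (x+1)/(c+1) = ((v^2 - u^2)/2 + (v - u))/(c+1) := by
  rw [intervalIntegral.integral_div]
  congr 1
  rw [intervalIntegral.integral_add (intervalIntegral.intervalIntegrable_id)
    intervalIntegrable_const, integral_id, intervalIntegral.integral_const]
  simp [smul_eq_mul, mul_one]

lemma integ2 (c u v : ℝ) : ∫ x in u..v, (1-x)/(1-c) = ((v - u) - (v^2 - u^2)/2)/(1-c) := by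
  rw [intervalIntegral.integral_div]
  congr 1
  rw [intervalIntegral.integral_sub intervalIntegrable_const
    (intervalIntegral.intervalIntegrable_id), integral_id, intervalIntegral.integral_const]
  simp [smul_eq_mul, mul_one]

lemma sfun_eq_left {c x : ℝ} (hc1 : -1 < c) (hc2 : c < 1) (hx : x ≤ c) :
    sfun c x = (x+1)/(c+1) := by
  apply min_eq_left
  rw [div_le_div_iff₀ (by linarith) (by linarith)]
  nlinarith

lemma sfun_eq_right {c x : ℝ} (hc1 : -1 < c) (hc2 : c < 1) (hx : c ≤ x) :
    sfun c x = (1-x)/(1-c) := by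
  apply min_eq_right
  rw [div_le_div_iff₀ (by linarith) (by linarith)]
  nlinarith

lemma sfun_integral (c δ : ℝ) (hc1 : -1 < c) (hc2 : c < 1) (hδ0 : 0 < δ) (hδ1 : δ < 1) :
    δ ≤ ∫ x in (-δ)..δ, sfun c x := by
  rcases le_or_gt δ c with hcase | hcase
  · have : ∫ x in (-δ)..δ, sfun c x = ∫ x in (-δ)..δ, (x+1)/(c+1) := by
      apply intervalIntegral.integral_congr
      intro x hx
      rw [Set.uIcc_of_le (by linarith)] at hx
      exact sfun_eq_left hc1 hc2 (le_trans hx.2 hcase)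
    rw [this, integ1]
    rw [le_div_iff₀ (by linarith)]
    nlinarith
  rcases le_or_gt c (-δ) with hcase2 | hcase2
  · have : ∫ x in (-δ)..δ, sfun c x = ∫ x in (-δ)..δ, (1-x)/(1-c) := by
      apply intervalIntegral.integral_congr
      intro x hx
      rw [Set.uIcc_of_le (by linarith)] at hx
      exact sfun_eq_right hc1 hc2 (le_trans hcase2 hx.1)
    rw [this, integ2]
    rw [le_div_iff₀ (by linarith)]
    nlinarith
  · have hi1 : IntervalIntegrable (sfun c) MeasureTheory.volume (-δ) c :=
      (sfun_cont c).intervalIntegrable _ _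
    have hi2 : IntervalIntegrable (sfun c) MeasureTheory.volume c δ :=
      (sfun_cont c).intervalIntegrable _ _
    rw [← intervalIntegral.integral_add_adjacent_intervals hi1 hi2]
    have e1 : ∫ x in (-δ)..c, sfun c x = ∫ x in (-δ)..c, (x+1)/(c+1) := by
      apply intervalIntegral.integral_congr
      intro x hx
      rw [Set.uIcc_of_le (by linarith)] at hx
      exact sfun_eq_left hc1 hc2 hx.2
    have e2 : ∫ x in c..δ, sfun c x = ∫ x in c..δ, (1-x)/(1-c) := by
      apply intervalIntegral.integral_congr
      intro x hx
      rw [Set.uIcc_of_le (by linarith)] at hx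
      exact sfun_eq_right hc1 hc2 hx.1
    rw [e1, e2, integ1, integ2]
    rw [div_add_div _ _ (by linarith : c+1 ≠ 0) (by linarith : 1-c ≠ 0),
      le_div_iff₀ (by nlinarith)]
    have hcδ : c^2 ≤ δ^2 := sq_le_sq' (by linarith) (by linarith)
    nlinarith [mul_nonneg (by linarith : (0:ℝ) ≤ 1 - δ) (by nlinarith : (0:ℝ) ≤ δ - c^2)]

lemma memK {K : Set ℂ} (hconv : Convex ℝ K) (h1 : (-1:ℂ) ∈ K) (h2 : (1:ℂ) ∈ K)
    {r : ℂ} (hr : r ∈ K) {t x : ℝ} (ht : 0 ≤ t)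
    (hA : t*(1+r.re) ≤ 1+x) (hB : t*(1-r.re) ≤ 1-x) :
    (x : ℂ) + t*r.im*Complex.I ∈ K := by
  have hμ : 0 ≤ (1 - t + x - t*r.re)/2 := by linarith
  have hν : 0 ≤ (1 - t - x + t*r.re)/2 := by linarith
  have key := hconv.sum_mem (t := (Finset.univ : Finset (Fin 3)))
    (w := ![t, (1 - t + x - t*r.re)/2, (1 - t - x + t*r.re)/2]) (z := ![r, 1, -1])
    (by intro i _; fin_cases i <;> simpa) (by simp [Fin.sum_univ_three]; ring)
    (by intro i _; fin_cases i <;> simpa)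
  rw [Fin.sum_univ_three] at key
  convert key using 1
  simp only [Matrix.cons_val_zero, Matrix.cons_val_one, Matrix.head_cons,
    Matrix.cons_val_two, Matrix.tail_cons, real_smul]
  apply Complex.ext <;> simp <;> ring

lemma mem_slice {K : Set ℂ} (hconv : Convex ℝ K) (h1 : (-1:ℂ) ∈ K) (h2 : (1:ℂ) ∈ K)
    {p q : ℂ} (hp : p ∈ K) (hq : q ∈ K)
    (hpre1 : -1 ≤ p.re) (hpre2 : p.re ≤ 1) (hqre1 : -1 ≤ q.re) (hqre2 : q.re ≤ 1)
    (hpim : 0 ≤ p.im) (hqim : q.im ≤ 0)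
    {x y : ℝ} (hx1 : -1 ≤ x) (hx2 : x ≤ 1)
    (hy1 : q.im * sfun q.re x ≤ y) (hy2 : y ≤ p.im * sfun p.re x) :
    (x:ℂ) + y*Complex.I ∈ K := by
  rcases le_or_gt 0 y with hy | hy
  · rcases hpim.eq_or_lt with hz | hz
    · have : y = 0 := le_antisymm (by rw [← hz] at hy2; simpa using hy2) hy
      subst this
      have := memK hconv h1 h2 hp (le_refl 0) (by simpa using by linarith : (0:ℝ)*(1+p.re) ≤ 1+x)
        (by simpa using by linarith : (0:ℝ)*(1-p.re) ≤ 1-x)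
      simpa using this
    · have ht : 0 ≤ y / p.im := div_nonneg hy hz.le
      have ht2 : y / p.im ≤ sfun p.re x := by
        rw [div_le_iff₀ hz]
        linarith [hy2, mul_comm p.im (sfun p.re x)]
      have hA : (y/p.im)*(1+p.re) ≤ 1+x :=
        le_trans (mul_le_mul_of_nonneg_right ht2 (by linarith)) (sfun_mul_le₁ hpre1 hx1 hx2)
      have hB : (y/p.im)*(1-p.re) ≤ 1-x :=
        le_trans (mul_le_mul_of_nonneg_right ht2 (by linarith)) (sfun_mul_le₂ hpre2 hx1 hx2)
      have := memK hconv h1 h2 hp ht hA hB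
      rwa [← Complex.ofReal_mul, div_mul_cancel₀ _ (ne_of_gt hz)] at this
  · have hqz : q.im < 0 := by
      by_contra hcon
      push_neg at hcon
      have : q.im = 0 := le_antisymm hqim hcon
      rw [this, zero_mul] at hy1
      linarith
    have ht : 0 ≤ y / q.im := by
      rw [le_div_iff_of_neg hqz]
      simpa using hy.le
    have ht2 : y / q.im ≤ sfun q.re x := by
      rw [div_le_iff_of_neg hqz]
      linarith [mul_comm q.im (sfun q.re x)]
    have hA : (y/q.im)*(1+q.re) ≤ 1+x :=
      le_trans (mul_le_mul_of_nonneg_right ht2 (by linarith)) (sfun_mul_le₁ hqre1 hx1 hx2)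
    have hB : (y/q.im)*(1-q.re) ≤ 1-x :=
      le_trans (mul_le_mul_of_nonneg_right ht2 (by linarith)) (sfun_mul_le₂ hqre2 hx1 hx2)
    have := memK hconv h1 h2 hq ht hA hB
    rwa [← Complex.ofReal_mul, div_mul_cancel₀ _ (ne_of_lt hqz)] at this


/-- The width of a planar set: the minimum over directions `γ` of the length of the
projection of `K` onto the direction `e^{iγ}`. -/
noncomputable def setWidth (K : Set ℂ) : ℝ :=
  ⨅ γ : ℝ, (sSup ((fun z : ℂ => (z * Complex.exp (γ * Complex.I)).re) '' K) -
    sInf ((fun z : ℂ => (z * Complex.exp (γ * Complex.I)).re) '' K))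

/-- For a compact convex `K ⊂ ℂ` of diameter `2` containing `±1` with width `w > 0`,
for every `δ ∈ (0,1)` the area of `K_δ = {x+iy ∈ K : |x| ≤ δ}` is at least `wδ`, and
consequently `λ(K_δ)/λ(K) ≥ δ/4`. -/
theorem stmt_15 (K : Set ℂ) (hK : IsCompact K) (hconv : Convex ℝ K)
    (hdiam : Metric.diam K = 2) (h1 : (-1 : ℂ) ∈ K) (h2 : (1 : ℂ) ∈ K)
    (w : ℝ) (hwdef : setWidth K = w) (hw : 0 < w) :
    ∀ δ ∈ Set.Ioo (0 : ℝ) 1,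
      ENNReal.ofReal (w * δ) ≤ volume {z ∈ K | z.re ∈ Set.Icc (-δ) δ} ∧
      ENNReal.ofReal (δ / 4) * volume K ≤ volume {z ∈ K | z.re ∈ Set.Icc (-δ) δ} := by
  intro δ hδ
  obtain ⟨hδ0, hδ1⟩ := hδ
  have hKne : K.Nonempty := ⟨1, h2⟩
  -- distance facts
  have hdist : ∀ z ∈ K, (z.re-1)^2 + z.im^2 ≤ 4 ∧ (z.re+1)^2 + z.im^2 ≤ 4 := by
    intro z hz
    have d1 : dist z 1 ≤ 2 := hdiam ▸ Metric.dist_le_diam_of_mem hK.isBounded hz h2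
    have d2 : dist z (-1) ≤ 2 := hdiam ▸ Metric.dist_le_diam_of_mem hK.isBounded hz h1
    rw [Complex.dist_eq] at d1 d2
    have e1 := Complex.sq_norm (z - 1)
    have e2 := Complex.sq_norm (z - (-1))
    rw [Complex.normSq_apply] at e1 e2
    simp only [Complex.sub_re, Complex.sub_im, Complex.one_re, Complex.one_im,
      Complex.neg_re, Complex.neg_im, Complex.one_re] at e1 e2
    constructor
    · nlinarith [norm_nonneg (z-1)]
    · nlinarith [norm_nonneg (z-(-1))]
  have hre : ∀ z ∈ K, -1 ≤ z.re ∧ z.re ≤ 1 := by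
    intro z hz
    obtain ⟨d1, d2⟩ := hdist z hz
    constructor <;> nlinarith [sq_nonneg z.im]
  have him4 : ∀ z ∈ K, (1+|z.re|)^2 + z.im^2 ≤ 4 := by
    intro z hz
    obtain ⟨d1, d2⟩ := hdist z hz
    rcases abs_cases z.re with ⟨h, _⟩ | ⟨h, _⟩ <;> rw [h] <;> nlinarith
  -- the imaginary extent is at most w
  have him : ∀ z ∈ K, |z.im| ≤ w := by
    intro z hz
    rw [← hwdef]
    apply le_ciInf
    intro γ
    have hproj : ∀ z' : ℂ, (z' * Complex.exp (↑γ * Complex.I)).re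
        = z'.re * Real.cos γ - z'.im * Real.sin γ := by
      intro z'
      rw [Complex.exp_mul_I]
      simp [Complex.mul_re, ← Complex.ofReal_cos, ← Complex.ofReal_sin]
    set g : ℂ → ℝ := fun z' : ℂ => (z' * Complex.exp (↑γ * Complex.I)).re with hg
    have hgc : Continuous g := Complex.continuous_re.comp (continuous_id.mul continuous_const)
    have hbA : BddAbove (g '' K) := (hK.image hgc).bddAbove
    have hbB : BddBelow (g '' K) := (hK.image hgc).bddBelow
    have hsup : ∀ z' ∈ K, z' ∈ K → g z' ≤ sSup (g '' K) := fun z' h _ => le_csSup hbA ⟨z', h, rfl⟩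
    have hinf : ∀ z' ∈ K, sInf (g '' K) ≤ g z' := fun z' h => csInf_le hbB ⟨z', h, rfl⟩
    have hg1 : g 1 = Real.cos γ := by rw [hg]; simp [hproj 1]
    have hgm1 : g (-1) = -Real.cos γ := by rw [hg]; simp [hproj (-1)]
    have hgz : g z = z.re * Real.cos γ - z.im * Real.sin γ := hproj z
    rcases le_or_gt 0 z.im with hzim | hzim
    · rw [_root_.abs_of_nonneg hzim]
      refine keyproj (Real.cos γ) (-(Real.sin γ)) z.re z.im _ _ ?_ hzim ?_ ?_ ?_ ?_ ?_ ?_ ?_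
      · rw [neg_pow]
        simp [Real.cos_sq_add_sin_sq]
      · exact him4 z hz
      · have := hsup (-1) h1 h1; rw [hgm1] at this; linarith
      · have := hsup 1 h2 h2; rw [hg1] at this; linarith
      · have := hsup z hz hz; rw [hgz] at this; linarith [this]
      · have := hinf (-1) h1; rw [hgm1] at this; linarith
      · have := hinf 1 h2; rw [hg1] at this; linarith
      · have := hinf z hz; rw [hgz] at this; linarith [this]
    · rw [_root_.abs_of_neg hzim]
      refine keyproj (Real.cos γ) (Real.sin γ) z.re (-z.im) _ _ ?_ (by linarith) ?_ ?_ ?_ ?_ ?_ ?_ ?_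
      · simp [Real.cos_sq_add_sin_sq]
      · have := him4 z hz; nlinarith
      · have := hsup (-1) h1 h1; rw [hgm1] at this; linarith
      · have := hsup 1 h2 h2; rw [hg1] at this; linarith
      · have := hsup z hz hz; rw [hgz] at this; linarith [this]
      · have := hinf (-1) h1; rw [hgm1] at this; linarith
      · have := hinf 1 h2; rw [hg1] at this; linarith
      · have := hinf z hz; rw [hgz] at this; linarith [this]
  -- extremal points in imaginary direction
  obtain ⟨p, hpK, hpmax⟩ := hK.exists_isMaxOn hKne Complex.continuous_im.continuousOn
  obtain ⟨q, hqK, hqmin⟩ := hK.exists_isMinOn hKne Complex.continuous_im.continuousOn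
  have h0K : (0:ℂ) ∈ K := by
    have := hconv h1 h2 (by norm_num : (0:ℝ) ≤ 1/2) (by norm_num : (0:ℝ) ≤ 1/2) (by norm_num)
    simpa using this
  have ha0 : 0 ≤ p.im := by simpa using hpmax h0K
  have hb0 : q.im ≤ 0 := by simpa using hqmin h0K
  -- w ≤ p.im - q.im
  have hwab : w ≤ p.im - q.im := by
    rw [← hwdef]
    have hbdd : BddBelow (Set.range fun γ : ℝ =>
        (sSup ((fun z : ℂ => (z * Complex.exp (γ * Complex.I)).re) '' K) -
          sInf ((fun z : ℂ => (z * Complex.exp (γ * Complex.I)).re) '' K))) := by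
      refine ⟨0, ?_⟩
      rintro r ⟨γ, rfl⟩
      set g : ℂ → ℝ := fun z' : ℂ => (z' * Complex.exp (↑γ * Complex.I)).re with hg
      have hgc : Continuous g := Complex.continuous_re.comp (continuous_id.mul continuous_const)
      have h1' : sInf (g '' K) ≤ g 1 := csInf_le (hK.image hgc).bddBelow ⟨1, h2, rfl⟩
      have h2' : g 1 ≤ sSup (g '' K) := le_csSup (hK.image hgc).bddAbove ⟨1, h2, rfl⟩
      simp only [Set.mem_setOf_eq]
      linarith
    refine le_trans (ciInf_le hbdd (-(Real.pi/2))) ?_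
    have heq : (fun z : ℂ => (z * Complex.exp (↑(-(Real.pi/2)) * Complex.I)).re)
        = fun z : ℂ => z.im := by
      funext z
      have : Complex.exp ((↑(-(Real.pi/2)) : ℂ) * Complex.I) = -Complex.I := by
        rw [Complex.exp_mul_I]
        push_cast
        simp
      rw [this]
      simp
    rw [heq]
    have hS : sSup (Complex.im '' K) = p.im :=
      IsGreatest.csSup_eq ⟨⟨p, hpK, rfl⟩, by rintro r ⟨z, hz, rfl⟩; exact hpmax hz⟩
    have hI : sInf (Complex.im '' K) = q.im :=
      IsLeast.csInf_eq ⟨⟨q, hqK, rfl⟩, by rintro r ⟨z, hz, rfl⟩; exact hqmin hz⟩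
    rw [hS, hI]
  -- measurability
  have hKm : MeasurableSet K := hK.isClosed.measurableSet
  set A := {z ∈ K | z.re ∈ Set.Icc (-δ) δ} with hAdef
  have hAm : MeasurableSet A := hKm.inter (Complex.measurable_re measurableSet_Icc)
  set B := Complex.measurableEquivRealProd.symm ⁻¹' A with hBdef
  have hBm : MeasurableSet B := Complex.measurableEquivRealProd.symm.measurable hAm
  have hvol : volume A = ∫⁻ x : ℝ, volume {y : ℝ | (x, y) ∈ B} := by
    rw [show volume A = (volume : Measure (ℝ × ℝ)) B from
      ((Complex.volume_preserving_equiv_real_prod.symm _).measure_preimage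
        hAm.nullMeasurableSet).symm]
    rw [Measure.volume_eq_prod, Measure.prod_apply hBm]
    rfl
  -- section bound
  have hsec : ∀ x ∈ Set.Icc (-δ) δ,
      ENNReal.ofReal (p.im * sfun p.re x - q.im * sfun q.re x) ≤ volume {y : ℝ | (x, y) ∈ B} := by
    intro x hx
    rw [Set.mem_Icc] at hx
    have hx1 : -1 ≤ x := by linarith [hx.1]
    have hx2 : x ≤ 1 := by linarith [hx.2]
    have hsub : Set.Icc (q.im * sfun q.re x) (p.im * sfun p.re x) ⊆ {y : ℝ | (x, y) ∈ B} := by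
      intro y hy
      rw [Set.mem_Icc] at hy
      show Complex.measurableEquivRealProd.symm (x, y) ∈ A
      rw [Complex.measurableEquivRealProd_symm_apply]
      refine ⟨?_, ?_⟩
      · rw [Complex.mk_eq_add_mul_I]
        exact mem_slice hconv h1 h2 hpK hqK (hre p hpK).1 (hre p hpK).2
          (hre q hqK).1 (hre q hqK).2 ha0 hb0 hx1 hx2 hy.1 hy.2
      · simpa using hx
    calc ENNReal.ofReal (p.im * sfun p.re x - q.im * sfun q.re x)
        = volume (Set.Icc (q.im * sfun q.re x) (p.im * sfun p.re x)) := by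
          rw [Real.volume_Icc]
      _ ≤ volume {y : ℝ | (x, y) ∈ B} := measure_mono hsub
  -- lintegral chain
  have c1 : ∫⁻ x in Set.Icc (-δ) δ,
      ENNReal.ofReal (p.im * sfun p.re x - q.im * sfun q.re x) ≤ volume A := by
    rw [hvol]
    exact le_trans (setLIntegral_mono (measurable_measure_prodMk_left hBm) hsec)
      (setLIntegral_le_lintegral _ _)
  -- from lintegral to integral
  have hgc0 : Continuous (fun x : ℝ => p.im * sfun p.re x - q.im * sfun q.re x) :=
    (continuous_const.mul (sfun_cont _)).sub (continuous_const.mul (sfun_cont _))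
  have hint : IntegrableOn (fun x : ℝ => p.im * sfun p.re x - q.im * sfun q.re x)
      (Set.Icc (-δ) δ) := hgc0.integrableOn_Icc
  have hnn : 0 ≤ᵐ[volume.restrict (Set.Icc (-δ) δ)]
      (fun x : ℝ => p.im * sfun p.re x - q.im * sfun q.re x) := by
    filter_upwards [ae_restrict_mem measurableSet_Icc] with x hx
    rw [Set.mem_Icc] at hx
    show (0:ℝ) ≤ p.im * sfun p.re x - q.im * sfun q.re x
    have hx1 : -1 ≤ x := by linarith [hx.1]
    have hx2 : x ≤ 1 := by linarith [hx.2]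
    have s1 := sfun_nonneg (hre p hpK).1 (hre p hpK).2 hx1 hx2
    have s2 := sfun_nonneg (hre q hqK).1 (hre q hqK).2 hx1 hx2
    have := mul_nonneg ha0 s1
    nlinarith [mul_nonneg (neg_nonneg.2 hb0) s2]
  have c2 : ENNReal.ofReal (w * δ) ≤ ∫⁻ x in Set.Icc (-δ) δ,
      ENNReal.ofReal (p.im * sfun p.re x - q.im * sfun q.re x) := by
    rw [← ofReal_integral_eq_lintegral_ofReal hint hnn]
    apply ENNReal.ofReal_le_ofReal
    rw [MeasureTheory.integral_Icc_eq_integral_Ioc,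
      ← intervalIntegral.integral_of_le (by linarith : -δ ≤ δ)]
    rw [intervalIntegral.integral_sub (f := fun x => p.im * sfun p.re x)
      (g := fun x => q.im * sfun q.re x)
      ((continuous_const.mul (sfun_cont _)).intervalIntegrable _ _)
      ((continuous_const.mul (sfun_cont _)).intervalIntegrable _ _),
      intervalIntegral.integral_const_mul, intervalIntegral.integral_const_mul]
    have hP : p.im * δ ≤ p.im * ∫ x in (-δ)..δ, sfun p.re x := by
      rcases ha0.eq_or_lt with hz | hz
      · rw [← hz]; simp
      · have hsq : (1+|p.re|)^2 < 4 := by nlinarith [him4 p hpK, mul_pos hz hz]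
        have hlt : |p.re| < 1 := by nlinarith [abs_nonneg p.re]
        rw [abs_lt] at hlt
        exact mul_le_mul_of_nonneg_left (sfun_integral _ _ hlt.1 hlt.2 hδ0 hδ1) hz.le
    have hQ : -q.im * δ ≤ -q.im * ∫ x in (-δ)..δ, sfun q.re x := by
      rcases hb0.lt_or_eq with hz | hz
      · have hsq : (1+|q.re|)^2 < 4 := by
          nlinarith [him4 q hqK, mul_pos_of_neg_of_neg hz hz]
        have hlt : |q.re| < 1 := by nlinarith [abs_nonneg q.re]
        rw [abs_lt] at hlt
        exact mul_le_mul_of_nonneg_left (sfun_integral _ _ hlt.1 hlt.2 hδ0 hδ1)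
          (by linarith)
      · rw [hz]; simp
    nlinarith [mul_nonneg (by linarith : (0:ℝ) ≤ p.im - q.im - w) hδ0.le]
  have part1 : ENNReal.ofReal (w * δ) ≤ volume A := le_trans c2 c1
  -- volume of K
  have hKsub : Complex.measurableEquivRealProd.symm ⁻¹' K
      ⊆ Set.Icc (-1:ℝ) 1 ×ˢ Set.Icc (-w) w := by
    rintro ⟨x, y⟩ hxy
    have hzK : ({re := x, im := y} : ℂ) ∈ K := by
      simpa using hxy
    constructor
    · have := hre _ hzK
      simpa using this
    · have := abs_le.mp (him _ hzK)
      simpa using this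
  have hvolK : volume K ≤ ENNReal.ofReal (2*(2*w)) := by
    calc volume K = (volume : Measure (ℝ × ℝ)) (Complex.measurableEquivRealProd.symm ⁻¹' K) :=
          ((Complex.volume_preserving_equiv_real_prod.symm _).measure_preimage
            hKm.nullMeasurableSet).symm
      _ ≤ (volume : Measure (ℝ × ℝ)) (Set.Icc (-1:ℝ) 1 ×ˢ Set.Icc (-w) w) :=
          measure_mono hKsub
      _ = ENNReal.ofReal (2*(2*w)) := by
          rw [Measure.volume_eq_prod, Measure.prod_prod, Real.volume_Icc, Real.volume_Icc,
            ← ENNReal.ofReal_mul (by norm_num)]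
          congr 1
          ring
  refine ⟨part1, ?_⟩
  calc ENNReal.ofReal (δ/4) * volume K ≤ ENNReal.ofReal (δ/4) * ENNReal.ofReal (2*(2*w)) :=
        mul_le_mul_right hvolK _
    _ = ENNReal.ofReal (δ/4*(2*(2*w))) := (ENNReal.ofReal_mul (by positivity)).symm
    _ = ENNReal.ofReal (w * δ) := by congr 1; ring
    _ ≤ volume A := part1
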